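/- Let o be an operator in TNF and φ a potential heuristic over features of size at most 2. Then max over states s in which o is applicable of (φ(s) − φ(s⟦o⟧)) equals Δ_o^{ind} + Σ_{V ∉ vars(o)} max_{v ∈ dom(V)} Σ_{f = f_o ∧ (V,v)} w(f)·Δ_o(f_o), where Δ_o^{ind} = Σ_{f : vars(f) ⊆ vars(o)} w(f)·([pre(o) ⊨ f] − [eff(o) ⊨ f]) and Δ_o(f_o) = [pre(o) ⊨ f_o] − [eff(o) ⊨ f_o], the inner sum ranging over context-dependent features consisting of a fact f_o on a variable of vars(o) and the fact (V,v). In particular the maximum is attained and is independent of features not mentioning vars(o). -/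

import Mathlib

attribute [local instance] Classical.propDecidable

abbrev PState (V : Type) (D : V → Type) := ∀ v, D v
abbrev PAssign (V : Type) (D : V → Type) := ∀ v, Option (D v)

def Models {V : Type} {D : V → Type} (s : PState V D) (f : PAssign V D) : Prop :=
  ∀ v, ∀ x ∈ f v, s v = x

def PModels {V : Type} {D : V → Type} (p f : PAssign V D) : Prop :=
  ∀ v, ∀ x ∈ f v, p v = some x

structure Op (V : Type) (D : V → Type) where
  pre : PAssign V D
  eff : PAssign V D
  cost : ℝ
  tnf : ∀ v, (pre v).isSome ↔ (eff v).isSome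
  cost_nonneg : 0 ≤ cost

def Op.applicable {V : Type} {D : V → Type} (o : Op V D) (s : PState V D) : Prop :=
  Models s o.pre

def Op.res {V : Type} {D : V → Type} (o : Op V D) (s : PState V D) : PState V D :=
  fun v => (o.eff v).getD (s v)

/-- The potential heuristic for features `F` and weights `w`. -/
noncomputable def pot {V : Type} {D : V → Type} [Fintype V]
    (F : Finset (PAssign V D)) (w : PAssign V D → ℝ) (s : PState V D) : ℝ :=
  ∑ f ∈ F, if Models s f then w f else 0

/-- Restriction of a feature to the variables of `o`. -/
noncomputable def restrictO {V : Type} {D : V → Type} (o : Op V D) (f : PAssign V D) :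
    PAssign V D :=
  fun v => if (o.pre v).isSome then f v else none

/-- `Δ_o^{ind}`: state-independent contribution of the context-independent features. -/
noncomputable def deltaInd {V : Type} {D : V → Type} [Fintype V]
    (o : Op V D) (F : Finset (PAssign V D)) (w : PAssign V D → ℝ) : ℝ :=
  ∑ f ∈ F.filter (fun f => ∀ v, (f v).isSome → (o.pre v).isSome),
    w f * ((if PModels o.pre f then (1 : ℝ) else 0) - (if PModels o.eff f then (1 : ℝ) else 0))

/-- Inner sum of `w(f)·Δ_o(f_o)` over the context-dependent features `f = f_o ∧ (u,x)`. -/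
noncomputable def innerSum {V : Type} {D : V → Type} [Fintype V]
    (o : Op V D) (F : Finset (PAssign V D)) (w : PAssign V D → ℝ)
    (u : V) (x : D u) : ℝ :=
  ∑ f ∈ F.filter (fun f => f u = some x ∧ ∃ v, (o.pre v).isSome ∧ (f v).isSome),
    w f * ((if PModels o.pre (restrictO o f) then (1 : ℝ) else 0) -
           (if PModels o.eff (restrictO o f) then (1 : ℝ) else 0))

section Aux
variable {V : Type} {D : V → Type}

lemma eff_none_of_pre_none (o : Op V D) {v : V} (h : ¬ (o.pre v).isSome) :
    o.eff v = none := by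
  rw [← Option.not_isSome_iff_eq_none]
  exact fun he => h ((o.tnf v).mpr he)

lemma res_eq_of_not_pre (o : Op V D) (s : PState V D) {v : V}
    (h : ¬ (o.pre v).isSome) : o.res s v = s v := by
  simp [Op.res, eff_none_of_pre_none o h]

lemma perFeature [Fintype V] [DecidableEq V]
    (o : Op V D) (w : PAssign V D → ℝ) (f : PAssign V D)
    (hf : (Finset.univ.filter fun v => (f v).isSome).card ≤ 2)
    (s : PState V D) (hs : o.applicable s) :
    ((if Models s f then w f else 0) - (if Models (o.res s) f then w f else 0)) =
      (if (∀ v, (f v).isSome → (o.pre v).isSome) then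
          w f * ((if PModels o.pre f then (1 : ℝ) else 0) -
                 (if PModels o.eff f then (1 : ℝ) else 0)) else 0)
      + ∑ u ∈ Finset.univ.filter (fun v : V => ¬ (o.pre v).isSome),
          (if (f u = some (s u) ∧ ∃ v, (o.pre v).isSome ∧ (f v).isSome) then
            w f * ((if PModels o.pre (restrictO o f) then (1 : ℝ) else 0) -
                   (if PModels o.eff (restrictO o f) then (1 : ℝ) else 0)) else 0) := by
  by_cases hA : ∀ v, (f v).isSome → (o.pre v).isSome
  · -- context-independent
    have hsum0 : ∑ u ∈ Finset.univ.filter (fun v : V => ¬ (o.pre v).isSome),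
        (if (f u = some (s u) ∧ ∃ v, (o.pre v).isSome ∧ (f v).isSome) then
          w f * ((if PModels o.pre (restrictO o f) then (1 : ℝ) else 0) -
                 (if PModels o.eff (restrictO o f) then (1 : ℝ) else 0)) else 0) = 0 := by
      refine Finset.sum_eq_zero fun u hu => ?_
      rw [if_neg]
      rintro ⟨h1, -⟩
      have : (f u).isSome := by rw [h1]; rfl
      exact (Finset.mem_filter.mp hu).2 (hA u this)
    have hMs : Models s f ↔ PModels o.pre f := by
      constructor
      · intro h v x hx
        have hp : (o.pre v).isSome := hA v (Option.isSome_iff_exists.mpr ⟨x, Option.mem_def.mp hx⟩)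
        obtain ⟨p, hp⟩ := Option.isSome_iff_exists.mp hp
        rw [hp]
        rw [← h v x hx, hs v p hp]
      · intro h v x hx
        have := h v x hx
        exact hs v x this
    have hMr : Models (o.res s) f ↔ PModels o.eff f := by
      constructor
      · intro h v x hx
        have hp : (o.pre v).isSome := hA v (Option.isSome_iff_exists.mpr ⟨x, Option.mem_def.mp hx⟩)
        obtain ⟨e, he⟩ := Option.isSome_iff_exists.mp ((o.tnf v).mp hp)
        rw [he]
        have : o.res s v = e := by simp [Op.res, he]
        rw [← h v x hx, this]
      · intro h v x hx
        have he := h v x hx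
        simp [Op.res, he]
    rw [hsum0, if_pos hA]
    by_cases h1 : PModels o.pre f <;> by_cases h2 : PModels o.eff f <;>
      simp [hMs, hMr, h1, h2]
  · push_neg at hA
    obtain ⟨u₀, hfu₀, hpu₀⟩ := hA
    rw [if_neg (show ¬∀ v, (f v).isSome → (o.pre v).isSome from fun h => hpu₀ (h u₀ hfu₀))]
    by_cases hC : ∃ v, (o.pre v).isSome ∧ (f v).isSome
    · obtain ⟨v₀, hpv₀, hfv₀⟩ := hC
      have hne : u₀ ≠ v₀ := fun h => hpu₀ (h ▸ hpv₀)
      have hsub : ({u₀, v₀} : Finset V) ⊆ Finset.univ.filter fun v => (f v).isSome := by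
        intro v hv
        simp only [Finset.mem_insert, Finset.mem_singleton] at hv
        rcases hv with h | h <;> subst h <;>
          exact Finset.mem_filter.mpr ⟨Finset.mem_univ _, by assumption⟩
      have h2card : ({u₀, v₀} : Finset V).card = 2 := by
        rw [Finset.card_insert_of_notMem (by simp [hne]), Finset.card_singleton]
      have hsupp : (Finset.univ.filter fun v => (f v).isSome) = {u₀, v₀} :=
        (Finset.eq_of_subset_of_card_le hsub (by rw [h2card]; exact hf)).symm
      have hvars : ∀ v, (f v).isSome → v = u₀ ∨ v = v₀ := by
        intro v hv
        have : v ∈ ({u₀, v₀} : Finset V) := hsupp ▸ (by simp [hv])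
        simpa using this
      obtain ⟨x₀, hx₀⟩ := Option.isSome_iff_exists.mp hfu₀
      obtain ⟨y₀, hy₀⟩ := Option.isSome_iff_exists.mp hfv₀
      obtain ⟨p₀, hp₀⟩ := Option.isSome_iff_exists.mp hpv₀
      obtain ⟨e₀, he₀⟩ := Option.isSome_iff_exists.mp ((o.tnf v₀).mp hpv₀)
      have hsv₀ : s v₀ = p₀ := hs v₀ p₀ hp₀
      have hresu₀ : o.res s u₀ = s u₀ := res_eq_of_not_pre o s hpu₀
      have hresv₀ : o.res s v₀ = e₀ := by simp [Op.res, he₀]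
      have hrO : ∀ v, (restrictO o f v).isSome → v = v₀ := by
        intro v hv
        rw [restrictO] at hv
        by_cases hp : (o.pre v).isSome
        · rw [if_pos hp] at hv
          rcases hvars v hv with h | h
          · exact absurd (h ▸ hp) hpu₀
          · exact h
        · rw [if_neg hp] at hv; simp at hv
      have hrOv₀ : restrictO o f v₀ = some y₀ := by simp [restrictO, hpv₀, hy₀]
      have hMpre : PModels o.pre (restrictO o f) ↔ p₀ = y₀ := by
        constructor
        · intro h
          have := h v₀ y₀ (by rw [hrOv₀]; rfl)
          rw [hp₀] at this; exact (Option.some_inj.mp this)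
        · intro h v x hx
          have hv : v = v₀ := hrO v (Option.isSome_iff_exists.mpr ⟨x, Option.mem_def.mp hx⟩)
          subst hv
          rw [hrOv₀] at hx
          simp only [Option.mem_def, Option.some_inj] at hx
          rw [hp₀, h, hx]
      have hMeff : PModels o.eff (restrictO o f) ↔ e₀ = y₀ := by
        constructor
        · intro h
          have := h v₀ y₀ (by rw [hrOv₀]; rfl)
          rw [he₀] at this; exact (Option.some_inj.mp this)
        · intro h v x hx
          have hv : v = v₀ := hrO v (Option.isSome_iff_exists.mpr ⟨x, Option.mem_def.mp hx⟩)
          subst hv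
          rw [hrOv₀] at hx
          simp only [Option.mem_def, Option.some_inj] at hx
          rw [he₀, h, hx]
      have hMs : Models s f ↔ (s u₀ = x₀ ∧ p₀ = y₀) := by
        constructor
        · intro h
          refine ⟨h u₀ x₀ (Option.mem_def.mpr hx₀), ?_⟩
          rw [← hsv₀, h v₀ y₀ (Option.mem_def.mpr hy₀)]
        · rintro ⟨h1, h2⟩ v x hx
          rcases hvars v (Option.isSome_iff_exists.mpr ⟨x, Option.mem_def.mp hx⟩) with h | h <;> subst h
          · rw [hx₀] at hx
            simp only [Option.mem_def, Option.some_inj] at hx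
            rw [h1, hx]
          · rw [hy₀] at hx
            simp only [Option.mem_def, Option.some_inj] at hx
            rw [hsv₀, h2, hx]
      have hMr : Models (o.res s) f ↔ (s u₀ = x₀ ∧ e₀ = y₀) := by
        constructor
        · intro h
          refine ⟨by rw [← hresu₀]; exact h u₀ x₀ (Option.mem_def.mpr hx₀), ?_⟩
          rw [← hresv₀]; exact h v₀ y₀ (Option.mem_def.mpr hy₀)
        · rintro ⟨h1, h2⟩ v x hx
          rcases hvars v (Option.isSome_iff_exists.mpr ⟨x, Option.mem_def.mp hx⟩) with h | h <;> subst h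
          · rw [hx₀] at hx
            simp only [Option.mem_def, Option.some_inj] at hx
            rw [hresu₀, h1, hx]
          · rw [hy₀] at hx
            simp only [Option.mem_def, Option.some_inj] at hx
            rw [hresv₀, h2, hx]
      have hsum : ∑ u ∈ Finset.univ.filter (fun v : V => ¬ (o.pre v).isSome),
          (if (f u = some (s u) ∧ ∃ v, (o.pre v).isSome ∧ (f v).isSome) then
            w f * ((if PModels o.pre (restrictO o f) then (1 : ℝ) else 0) -
                   (if PModels o.eff (restrictO o f) then (1 : ℝ) else 0)) else 0)
          = (if f u₀ = some (s u₀) then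
              w f * ((if PModels o.pre (restrictO o f) then (1 : ℝ) else 0) -
                     (if PModels o.eff (restrictO o f) then (1 : ℝ) else 0)) else 0) := by
        rw [Finset.sum_eq_single_of_mem u₀ (Finset.mem_filter.mpr ⟨Finset.mem_univ _, hpu₀⟩)]
        · congr 1
          simp only [eq_iff_iff]
          constructor
          · exact fun h => h.1
          · exact fun h => ⟨h, v₀, hpv₀, hfv₀⟩
        · intro u hu hneu
          rw [if_neg]
          rintro ⟨h1, -⟩
          rcases hvars u (by simp [h1]) with h | h
          · exact hneu h
          · exact (Finset.mem_filter.mp hu).2 (h ▸ hpv₀)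
      rw [hsum]
      have hfu : f u₀ = some (s u₀) ↔ s u₀ = x₀ := by
        rw [hx₀]
        constructor
        · intro h; exact (Option.some_inj.mp h).symm
        · intro h; rw [h]
      simp only [hfu]
      by_cases h1 : s u₀ = x₀ <;> by_cases h2 : p₀ = y₀ <;> by_cases h3 : e₀ = y₀ <;>
        simp [hMs, hMr, hMpre, hMeff, h1, h2, h3]
    · -- irrelevant feature
      have hsum0 : ∑ u ∈ Finset.univ.filter (fun v : V => ¬ (o.pre v).isSome),
          (if (f u = some (s u) ∧ ∃ v, (o.pre v).isSome ∧ (f v).isSome) then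
            w f * ((if PModels o.pre (restrictO o f) then (1 : ℝ) else 0) -
                   (if PModels o.eff (restrictO o f) then (1 : ℝ) else 0)) else 0) = 0 := by
        refine Finset.sum_eq_zero fun u hu => if_neg (fun h => hC h.2)
      rw [hsum0]
      have heq : Models (o.res s) f ↔ Models s f := by
        have hres : ∀ v, (f v).isSome → o.res s v = s v := fun v hv =>
          res_eq_of_not_pre o s fun hp => hC ⟨v, hp, hv⟩
        constructor <;> intro h v x hx
        · rw [← hres v (Option.isSome_iff_exists.mpr ⟨x, Option.mem_def.mp hx⟩)]
          exact h v x hx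
        · rw [hres v (Option.isSome_iff_exists.mpr ⟨x, Option.mem_def.mp hx⟩)]
          exact h v x hx
      by_cases h : Models s f <;> simp [heq, h]

lemma key [Fintype V] [DecidableEq V]
    (o : Op V D) (F : Finset (PAssign V D)) (w : PAssign V D → ℝ)
    (hsize : ∀ f ∈ F, (Finset.univ.filter fun v => (f v).isSome).card ≤ 2)
    (s : PState V D) (hs : o.applicable s) :
    pot F w s - pot F w (o.res s) =
      deltaInd o F w + ∑ u ∈ Finset.univ.filter (fun v : V => ¬ (o.pre v).isSome),
        innerSum o F w u (s u) := by
  have h1 : pot F w s - pot F w (o.res s) =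
      ∑ f ∈ F, ((if Models s f then w f else 0) - (if Models (o.res s) f then w f else 0)) := by
    rw [pot, pot, ← Finset.sum_sub_distrib]
  have h2 : deltaInd o F w = ∑ f ∈ F, (if (∀ v, (f v).isSome → (o.pre v).isSome) then
      w f * ((if PModels o.pre f then (1 : ℝ) else 0) -
             (if PModels o.eff f then (1 : ℝ) else 0)) else 0) := by
    rw [deltaInd, Finset.sum_filter]
  have h3 : ∀ u, ∀ x : D u, innerSum o F w u x =
      ∑ f ∈ F, (if (f u = some x ∧ ∃ v, (o.pre v).isSome ∧ (f v).isSome) then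
        w f * ((if PModels o.pre (restrictO o f) then (1 : ℝ) else 0) -
               (if PModels o.eff (restrictO o f) then (1 : ℝ) else 0)) else 0) := by
    intro u x; rw [innerSum, Finset.sum_filter]
  rw [h1, h2]
  conv_rhs => rw [show (∑ u ∈ Finset.univ.filter (fun v : V => ¬ (o.pre v).isSome),
    innerSum o F w u (s u)) = _ from Finset.sum_congr rfl fun u _ => h3 u (s u)]
  rw [Finset.sum_comm, ← Finset.sum_add_distrib]
  exact Finset.sum_congr rfl fun f hf => perFeature o w f (hsize f hf) s hs
end Aux

/-- For a potential heuristic over features of size at most 2, the maximum of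
`φ(s) − φ(s⟦o⟧)` over the states in which `o` is applicable is attained and equals
`Δ_o^{ind} + Σ_{V ∉ vars(o)} max_{v ∈ dom(V)} Σ_{f = f_o ∧ (V,v)} w(f)·Δ_o(f_o)`. -/
theorem stmt6 {V : Type} {D : V → Type} [Fintype V] [DecidableEq V]
    [∀ v, Fintype (D v)] [∀ v, DecidableEq (D v)] [∀ v, Nonempty (D v)]
    (o : Op V D) (F : Finset (PAssign V D)) (w : PAssign V D → ℝ)
    (hsize : ∀ f ∈ F, (Finset.univ.filter fun v => (f v).isSome).card ≤ 2) :
    IsGreatest {y : ℝ | ∃ s : PState V D, o.applicable s ∧ y = pot F w s - pot F w (o.res s)}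
      (deltaInd o F w +
        ∑ u ∈ Finset.univ.filter (fun v : V => ¬ (o.pre v).isSome),
          Finset.univ.sup' Finset.univ_nonempty (fun x : D u => innerSum o F w u x)) := by
  constructor
  · have hmax : ∀ u : V, ∃ x : D u,
        Finset.univ.sup' Finset.univ_nonempty (fun x : D u => innerSum o F w u x) =
          innerSum o F w u x := by
      intro u
      obtain ⟨x, -, hx⟩ := Finset.exists_mem_eq_sup' Finset.univ_nonempty
        (fun x : D u => innerSum o F w u x)
      exact ⟨x, hx⟩
    set s : PState V D := fun v =>
      if h : (o.pre v).isSome then (o.pre v).get h else Classical.choose (hmax v) with hsdef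
    have happ : o.applicable s := by
      intro v x hx
      have hpv : o.pre v = some x := Option.mem_def.mp hx
      simp [hsdef, hpv]
    refine ⟨s, happ, ?_⟩
    rw [key o F w hsize s happ]
    congr 1
    refine Finset.sum_congr rfl fun u hu => ?_
    have hpu : ¬ (o.pre u).isSome := (Finset.mem_filter.mp hu).2
    have hsu : s u = Classical.choose (hmax u) := by simp [hsdef, hpu]
    rw [hsu]
    exact Classical.choose_spec (hmax u)
  · rintro y ⟨s, hs, rfl⟩
    rw [key o F w hsize s hs]
    apply add_le_add (le_refl _)
    exact Finset.sum_le_sum fun u _ => Finset.le_sup' _ (Finset.mem_univ (s u))
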